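/- Let s be a prime power, n ≥ 2, let h₁, h₂ be linearly independent nonzero linear forms in variables x₂,...,xₙ over F_s, and let a₁, a₂ ∈ F_s. Then the columns f(x) = x₁² + a₁x₁ + h₁(x₂,...,xₙ) and g(x) = a₂x₁ + h₂(x₂,...,xₙ), as x ranges over F_sⁿ, are orthogonal: every pair (u,v) ∈ F_s² occurs exactly s^{n−2} times as (f(x), g(x)). -/

import Mathlib

/-- Lemma 11(i): if `h₁, h₂` are independent linear forms in `x₂,…,xₙ`, then
the columns `x₁² + a₁x₁ + h₁` and `a₂x₁ + h₂` are orthogonal. -/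
theorem quadratic_linear_orthogonal
    {F : Type*} [Field F] [Fintype F] {n : ℕ} (hn : 3 ≤ n)
    (h₁ h₂ : (Fin (n - 1) → F) →ₗ[F] F)
    (hind : ∀ t : F, h₁ ≠ t • h₂ ∧ h₂ ≠ t • h₁)
    (a₁ a₂ : F) :
    ∀ u v : F,
      Nat.card {x : F × (Fin (n - 1) → F) //
          x.1 ^ 2 + a₁ * x.1 + h₁ x.2 = u ∧ a₂ * x.1 + h₂ x.2 = v}
        = Fintype.card F ^ (n - 2) := by
  classical
  intro u v
  set V := Fin (n - 1) → F
  set L : V →ₗ[F] F × F := h₁.prod h₂ with hL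
  -- h₂ ≠ 0
  have hh₂ : h₂ ≠ 0 := by
    have := (hind 0).2
    simpa using this
  obtain ⟨y₂, hy₂⟩ : ∃ y₂, h₂ y₂ ≠ 0 := by
    by_contra h
    push_neg at h
    exact hh₂ (LinearMap.ext fun y => by simp [h y])
  -- there is z with h₂ z = 0, h₁ z ≠ 0
  obtain ⟨z, hz₂, hz₁⟩ : ∃ z, h₂ z = 0 ∧ h₁ z ≠ 0 := by
    by_contra h
    push_neg at h
    apply (hind (h₁ y₂ / h₂ y₂)).1
    refine LinearMap.ext fun y => ?_
    have hker : h₂ (y - (h₂ y / h₂ y₂) • y₂) = 0 := by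
      simp [map_sub, map_smul, div_mul_cancel₀ _ hy₂, smul_eq_mul]
    have h1 : h₁ (y - (h₂ y / h₂ y₂) • y₂) = 0 := h _ hker
    simp only [map_sub, map_smul, smul_eq_mul, sub_eq_zero] at h1
    simp only [LinearMap.smul_apply, smul_eq_mul]
    rw [h1]; field_simp
  -- L is surjective
  have hLsurj : Function.Surjective L := by
    rintro ⟨p, q⟩
    refine ⟨(q / h₂ y₂) • y₂ + ((p - (q / h₂ y₂) * h₁ y₂) / h₁ z) • z, ?_⟩
    have : L ((q / h₂ y₂) • y₂ + ((p - (q / h₂ y₂) * h₁ y₂) / h₁ z) • z)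
        = ((q / h₂ y₂) * h₁ y₂ + ((p - (q / h₂ y₂) * h₁ y₂) / h₁ z) * h₁ z,
           (q / h₂ y₂) * h₂ y₂ + ((p - (q / h₂ y₂) * h₁ y₂) / h₁ z) * h₂ z) := by
      simp [hL, LinearMap.prod_apply, map_add, map_smul, smul_eq_mul]
    rw [this]
    rw [hz₂, div_mul_cancel₀ _ hz₁, div_mul_cancel₀ _ hy₂]
    simp
  -- right inverse
  let r : F × F → V := Function.surjInv hLsurj
  have hr : ∀ w, L (r w) = w := Function.surjInv_eq hLsurj
  -- the target of the fiber over x₁ = t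
  let c : F → F × F := fun t => (u - (t ^ 2 + a₁ * t), v - a₂ * t)
  -- equivalence with F × ker L
  have key : {x : F × V //
      x.1 ^ 2 + a₁ * x.1 + h₁ x.2 = u ∧ a₂ * x.1 + h₂ x.2 = v}
      ≃ F × (LinearMap.ker L) := by
    refine
      { toFun := fun x => (x.1.1, ⟨x.1.2 - r (c x.1.1), ?_⟩)
        invFun := fun p => ⟨(p.1, (p.2 : V) + r (c p.1)), ?_⟩
        left_inv := ?_, right_inv := ?_ }
    · obtain ⟨⟨t, y⟩, h1, h2⟩ := x
      have hLy : L y = c t := by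
        simp only [hL, LinearMap.prod_apply, LinearMap.coe_prod, Function.prod, c, Prod.mk.injEq]
        exact ⟨by linear_combination h1, by linear_combination h2⟩
      simp [LinearMap.mem_ker, map_sub, hLy, hr]
    · obtain ⟨t, w⟩ := p
      have hw : L (w : V) = 0 := w.2
      have : L ((w : V) + r (c t)) = c t := by rw [map_add, hw, hr, zero_add]
      have h1 : h₁ ((w : V) + r (c t)) = u - (t ^ 2 + a₁ * t) :=
        congrArg Prod.fst this
      have h2 : h₂ ((w : V) + r (c t)) = v - a₂ * t :=
        congrArg Prod.snd this
      constructor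
      · rw [h1]; ring
      · rw [h2]; ring
    · rintro ⟨⟨t, y⟩, hx⟩; simp
    · rintro ⟨t, w⟩; simp
  rw [Nat.card_congr key, Nat.card_prod]
  -- cardinalities
  have hcardV : Nat.card V = Fintype.card F ^ (n - 1) := by
    simp [V, Nat.card_eq_fintype_card]
  have hquot : Nat.card (V ⧸ LinearMap.ker L) = Fintype.card F ^ 2 := by
    rw [Nat.card_congr (LinearMap.quotKerEquivOfSurjective L hLsurj).toEquiv]
    simp [Nat.card_eq_fintype_card, sq]
  have hmul := Submodule.card_eq_card_quotient_mul_card (LinearMap.ker L)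
  rw [hcardV, hquot, mul_comm] at hmul
  have hq : 0 < Fintype.card F := Fintype.card_pos
  have hker : Nat.card (LinearMap.ker L) = Fintype.card F ^ (n - 3) := by
    have : Fintype.card F ^ 2 * Nat.card (LinearMap.ker L)
        = Fintype.card F ^ 2 * Fintype.card F ^ (n - 3) := by
      rw [← hmul, ← pow_add]
      congr 1
      omega
    exact Nat.eq_of_mul_eq_mul_left (by positivity) this
  rw [Nat.card_eq_fintype_card, hker, ← pow_succ']
  congr 1
  omega
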